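/- Let (g, ⟨·,·⟩) be a 5-dimensional metric Lie algebra with center of dimension at least 2 admitting a strict CKY 2-form ω. Then ω is never closed; more specifically, in the normal form g_{r,s} with orthonormal basis {ξ, z₁, z₂, x, y} and brackets [ξ,x] = r z₁ + a₄y, [ξ,y] = r z₂ − a₄x, [x,y] = sξ, the exterior derivative satisfies dω(x, z₂, ξ) = −6r/s ≠ 0, where ω is the strict CKY 2-form from equation ω = (2(s²+2r²)/(r²s)) z¹∧z² + (2/r)(z¹∧x* + z²∧y*) + (4/s) x*∧y*. -/

import Mathlib

open scoped RealInnerProductSpace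

noncomputable abbrev V5 : Type := EuclideanSpace ℝ (Fin 5)

/-- standard orthonormal basis `{ξ, z₁, z₂, x, y} = {e 0, e 1, e 2, e 3, e 4}`. -/
noncomputable abbrev e (i : Fin 5) : V5 := EuclideanSpace.single i (1 : ℝ)

lemma e_inner (i j : Fin 5) : ⟪e i, e j⟫ = if i = j then (1:ℝ) else 0 := by
  simp [EuclideanSpace.inner_single_left, EuclideanSpace.single_apply, eq_comm]

/-- the strict CKY 2-form `ω(u,v) = ⟪Tu, v⟫` on `g_{r,s}` is never
closed: its exterior derivative `dω(u,v,w) = −ω([u,v],w) + ω([u,w],v) − ω([v,w],u)`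
is not identically zero; specifically `dω(x, z₂, ξ) = −6r/s ≠ 0`. -/
theorem grs_cky_form_never_closed
    (r s : ℝ) (hr : 0 < r) (hs : 0 < s)
    (lb : V5 →ₗ[ℝ] V5 →ₗ[ℝ] V5)
    (hanti : ∀ u : V5, lb u u = 0)
    (hjac : ∀ u v w : V5, lb u (lb v w) + lb v (lb w u) + lb w (lb u v) = 0)
    (hb1 : lb (e 0) (e 3) = r • e 1 + ((s^2 - r^2)/s) • e 4)
    (hb2 : lb (e 0) (e 4) = r • e 2 - ((s^2 - r^2)/s) • e 3)
    (hb3 : lb (e 3) (e 4) = s • e 0)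
    (hb4 : lb (e 0) (e 1) = 0) (hb5 : lb (e 0) (e 2) = 0)
    (hb6 : lb (e 1) (e 2) = 0) (hb7 : lb (e 1) (e 3) = 0)
    (hb8 : lb (e 1) (e 4) = 0) (hb9 : lb (e 2) (e 3) = 0)
    (hb10 : lb (e 2) (e 4) = 0)
    -- the tensor of the strict CKY 2-form ω
    (T : V5 →ₗ[ℝ] V5)
    (hT0 : T (e 0) = 0)
    (hT1 : T (e 1) = (2*(s^2 + 2*r^2)/(r^2*s)) • e 2 + (2/r) • e 3)
    (hT2 : T (e 2) = -(2*(s^2 + 2*r^2)/(r^2*s)) • e 1 + (2/r) • e 4)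
    (hT3 : T (e 3) = -(2/r) • e 1 + (4/s) • e 4)
    (hT4 : T (e 4) = -(2/r) • e 2 - (4/s) • e 3) :
    (¬ ∀ u v w : V5,
      -⟪T (lb u v), w⟫ + ⟪T (lb u w), v⟫ - ⟪T (lb v w), u⟫ = 0) ∧
    (-⟪T (lb (e 3) (e 2)), e 0⟫ + ⟪T (lb (e 3) (e 0)), e 2⟫ - ⟪T (lb (e 2) (e 0)), e 3⟫
      = -6 * r / s) ∧
    (-6 * r / s : ℝ) ≠ 0 := by
  have hskew : ∀ u v : V5, lb u v = - lb v u := by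
    intro u v
    have h := hanti (u + v)
    simp only [map_add, LinearMap.add_apply, hanti, zero_add, add_zero] at h
    exact eq_neg_of_add_eq_zero_left ((add_comm _ _).trans h)
  have h32 : lb (e 3) (e 2) = 0 := by rw [hskew, hb9, neg_zero]
  have h20 : lb (e 2) (e 0) = 0 := by rw [hskew, hb5, neg_zero]
  have h30 : lb (e 3) (e 0) = -(r • e 1 + ((s^2 - r^2)/s) • e 4) := by
    rw [hskew, hb1]
  have key : -⟪T (lb (e 3) (e 2)), e 0⟫ + ⟪T (lb (e 3) (e 0)), e 2⟫
      - ⟪T (lb (e 2) (e 0)), e 3⟫ = -6 * r / s := by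
    rw [h32, h20, h30]
    simp only [map_zero, inner_zero_left, map_neg, map_add, map_smul, hT1, hT4,
      inner_neg_left, inner_add_left, inner_smul_left, smul_add, smul_smul,
      conj_trivial]
    simp only [e_inner, Fin.reduceEq, reduceIte, if_true, if_false]
    norm_num
    field_simp
    simp only [inner_sub_left, inner_neg_left, inner_smul_left, e_inner, conj_trivial,
      if_true, Fin.reduceEq, reduceIte, mul_one, mul_zero, sub_zero]
    field_simp
    ring
  have hne : (-6 * r / s : ℝ) ≠ 0 := by
    have : (0:ℝ) < 6 * r / s := by positivity
    intro h
    rw [neg_mul, neg_div, neg_eq_zero] at h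
    linarith
  refine ⟨?_, key, hne⟩
  intro hall
  have := hall (e 3) (e 2) (e 0)
  rw [key] at this
  exact hne this
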